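/- Let n ≥ 2, let K ⊆ ℝⁿ be a convex body, and define f : ℝⁿ → ℝ by f(x) := infDist(x, ∂K), the (Euclidean) distance from x to the topological boundary of K. Then for Lebesgue-almost every x in the interior of K, f is differentiable at x and ‖fderiv ℝ f x‖ = 1. -/

import Mathlib

open MeasureTheory Metric Set Topology Filter

noncomputable section

/-- For a convex body `K ⊆ ℝⁿ`, the distance function to the boundary
`f(x) = infDist(x, ∂K)` is, at Lebesgue-almost every point of the interior of `K`,
differentiable with derivative of norm one. -/
theorem distance_to_boundary_ae_deriv_norm_one (n : ℕ) (hn : 2 ≤ n)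
    (K : Set (EuclideanSpace ℝ (Fin n)))
    (hKc : IsCompact K) (hKconv : Convex ℝ K) (hKint : (interior K).Nonempty) :
    ∀ᵐ x ∂(volume.restrict (interior K)),
      DifferentiableAt ℝ (fun y : EuclideanSpace ℝ (Fin n) => infDist y (frontier K)) x ∧
      ‖fderiv ℝ (fun y : EuclideanSpace ℝ (Fin n) => infDist y (frontier K)) x‖ = 1 := by
  set f : EuclideanSpace ℝ (Fin n) → ℝ := fun y => infDist y (frontier K) with hf_def
  haveI : Nonempty (Fin n) := ⟨⟨0, by omega⟩⟩
  -- K ≠ univ since the space is noncompact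
  have hKne_univ : K ≠ univ := by
    intro h
    exact (not_compactSpace_iff.2 inferInstance) (isCompact_univ_iff.1 (h ▸ hKc))
  have hKne : K.Nonempty := hKint.mono interior_subset
  have hfront : (frontier K).Nonempty := by
    rw [nonempty_iff_ne_empty]
    intro h
    rcases isClopen_iff.1 (isClopen_iff_frontier_eq_empty.2 h) with h1 | h1
    · exact hKne.ne_empty h1
    · exact hKne_univ h1
  have hfrontc : IsCompact (frontier K) :=
    hKc.of_isClosed_subset isClosed_frontier
      (by rw [hKc.isClosed.frontier_eq]; exact diff_subset)
  have hlip : LipschitzWith 1 f := lipschitz_infDist_pt (frontier K)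
  have hdiff := hlip.ae_differentiableAt (μ := (volume : Measure (EuclideanSpace ℝ (Fin n))))
  have hdiff' : ∀ᵐ x ∂(volume.restrict (interior K)), DifferentiableAt ℝ f x :=
    ae_restrict_of_ae hdiff
  rw [ae_restrict_iff' isOpen_interior.measurableSet] at hdiff' ⊢
  filter_upwards [hdiff'] with x hx hxK
  have hdx : DifferentiableAt ℝ f x := hx hxK
  refine ⟨hdx, ?_⟩
  have hfd := hdx.hasFDerivAt
  set L := fderiv ℝ f x with hL
  -- f x > 0
  have hxnot : x ∉ frontier K := fun h => h.2 hxK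
  have hfx_pos : 0 < f x :=
    (isClosed_frontier.notMem_iff_infDist_pos hfront).1 hxnot
  -- nearest point
  obtain ⟨p, hp, hpd⟩ := hfrontc.exists_infDist_eq_dist hfront x
  have hxp : dist x p = f x := hpd.symm
  have hxp_pos : 0 < dist x p := by rw [hxp]; exact hfx_pos
  set v : EuclideanSpace ℝ (Fin n) := p - x with hv
  -- key equality : f (x + t • v) = (1 - t) * f x for t ∈ [0,1]
  have key : ∀ t : ℝ, t ∈ Icc (0:ℝ) 1 → f (x + t • v) = (1 - t) * f x := by
    intro t ht
    have hdist1 : dist (x + t • v) p = (1 - t) * dist x p := by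
      rw [dist_eq_norm, dist_eq_norm]
      have : x + t • v - p = (1 - t) • (x - p) := by
        rw [hv]; module
      rw [this, norm_smul]
      simp [abs_of_nonneg (by linarith [ht.2] : (0:ℝ) ≤ 1 - t)]
    have hdist2 : dist x (x + t • v) = t * dist x p := by
      rw [dist_eq_norm, dist_eq_norm]
      have : x - (x + t • v) = t • (x - p) := by rw [hv]; module
      rw [this, norm_smul]
      simp [abs_of_nonneg ht.1]
    have hub : f (x + t • v) ≤ (1 - t) * f x := by
      calc f (x + t • v) ≤ dist (x + t • v) p := infDist_le_dist_of_mem hp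
        _ = (1 - t) * f x := by rw [hdist1, hxp]
    have hlb : (1 - t) * f x ≤ f (x + t • v) := by
      have := infDist_le_infDist_add_dist (x := x) (y := x + t • v) (s := frontier K)
      rw [hdist2, hxp] at this
      change f x ≤ f (x + t • v) + t * f x at this
      linarith
    linarith
  -- derivative along the segment
  have hc : HasDerivAt (fun t : ℝ => x + t • v) v 0 := by
    simpa using ((hasDerivAt_id (0:ℝ)).smul_const v).const_add x
  have hcomp : HasDerivAt (fun t : ℝ => f (x + t • v)) (L v) 0 := by
    have hfd' : HasFDerivAt f L ((fun t : ℝ => x + t • v) 0) := by simpa using hfd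
    exact hfd'.comp_hasDerivAt 0 hc
  have hslope : L v = -(f x) := by
    have h1 : Filter.Tendsto (slope (fun t : ℝ => f (x + t • v)) 0) (𝓝[>] (0:ℝ)) (𝓝 (L v)) :=
      (hasDerivAt_iff_tendsto_slope.1 hcomp).mono_left
        (nhdsWithin_mono _ (fun t ht => ne_of_gt ht))
    have h2 : Filter.Tendsto (slope (fun t : ℝ => f (x + t • v)) 0) (𝓝[>] (0:ℝ))
        (𝓝 (-(f x))) := by
      have hev : ∀ᶠ t in 𝓝[>] (0:ℝ),
          slope (fun t : ℝ => f (x + t • v)) 0 t = -(f x) := by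
        filter_upwards [Ioo_mem_nhdsGT_of_mem (by norm_num : (0:ℝ) ∈ Ico (0:ℝ) 1)]
          with t ht
        have ht' : t ∈ Icc (0:ℝ) 1 := ⟨le_of_lt ht.1, le_of_lt ht.2⟩
        have htne : t ≠ 0 := ne_of_gt ht.1
        rw [slope_def_field, key t ht', key 0 (by norm_num)]
        field_simp
        ring
      exact Filter.Tendsto.congr' (Filter.EventuallyEq.symm hev) tendsto_const_nhds
    exact tendsto_nhds_unique h1 h2
  -- norm bounds
  have hub : ‖L‖ ≤ 1 := by
    have := hfd.le_of_lipschitz hlip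
    simpa using this
  have hvnorm : ‖v‖ = dist x p := by rw [hv, dist_eq_norm, norm_sub_rev]
  have hlb : 1 ≤ ‖L‖ := by
    have h1 : ‖L v‖ ≤ ‖L‖ * ‖v‖ := L.le_opNorm v
    rw [hslope, hvnorm] at h1
    rw [Real.norm_eq_abs, abs_neg, abs_of_pos hfx_pos, hxp] at h1
    nlinarith
  linarith
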